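/- For a motion of the Kepler problem with nonzero angular momentum L = L e_z (L ≠ 0), the momentum vector satisfies p(θ) = (m²k/L)(−sin θ e_x + cos θ e_y) + c for some constant vector c, where θ is the polar angle of r in the plane orthogonal to L. Consequently the hodograph (the curve traced by p) lies on a circle of radius R = m²k/|L| centered at c. -/

import Mathlib

/-- The cross product on Euclidean 3-space. -/
noncomputable def cross (a b : EuclideanSpace ℝ (Fin 3)) : EuclideanSpace ℝ (Fin 3) :=
  WithLp.toLp 2 ![a 1 * b 2 - a 2 * b 1, a 2 * b 0 - a 0 * b 2, a 0 * b 1 - a 1 * b 0]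

noncomputable def ex : EuclideanSpace ℝ (Fin 3) := EuclideanSpace.single 0 1
noncomputable def ey : EuclideanSpace ℝ (Fin 3) := EuclideanSpace.single 1 1
noncomputable def ez : EuclideanSpace ℝ (Fin 3) := EuclideanSpace.single 2 1

lemma comp_deriv {f : ℝ → EuclideanSpace ℝ (Fin 3)} {v : EuclideanSpace ℝ (Fin 3)} {t : ℝ}
    (i : Fin 3) (h : HasDerivAt f v t) : HasDerivAt (fun s => f s i) (v i) t := by
  have := (EuclideanSpace.proj (𝕜 := ℝ) i).hasFDerivAt.comp_hasDerivAt t h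
  exact this

lemma norm_unit_vec (x : ℝ) (a b : ℝ) (hab : a ^ 2 + b ^ 2 = 1) :
    ‖(a • ex + b • ey : EuclideanSpace ℝ (Fin 3))‖ = 1 := by
  rw [EuclideanSpace.norm_eq]
  rw [show ∑ i : Fin 3, ‖(a • ex + b • ey : EuclideanSpace ℝ (Fin 3)) i‖ ^ 2 = 1 by
    simp [Fin.sum_univ_three, ex, ey, EuclideanSpace.single_apply, Real.norm_eq_abs, sq_abs]
    nlinarith]
  exact Real.sqrt_one

theorem kepler_hodograph_circle
    (m k L : ℝ) (hm : 0 < m) (hk : 0 < k) (hL : L ≠ 0)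
    (r p : ℝ → EuclideanSpace ℝ (Fin 3))
    (hr0 : ∀ t, r t ≠ 0)
    (hr : ∀ t, HasDerivAt r ((1 / m) • p t) t)
    (hp : ∀ t, HasDerivAt p (-(k * m / ‖r t‖ ^ 3) • r t) t)
    (hang : ∀ t, cross (r t) (p t) = L • ez)
    (θ : ℝ → ℝ) (hθdiff : Differentiable ℝ θ)
    (hθ : ∀ t, r t = ‖r t‖ • (Real.cos (θ t) • ex + Real.sin (θ t) • ey)) :
    ∃ c : EuclideanSpace ℝ (Fin 3),
      (∀ t, p t = (m ^ 2 * k / L) • (-Real.sin (θ t) • ex + Real.cos (θ t) • ey) + c) ∧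
      (∀ t, ‖p t - c‖ = m ^ 2 * k / |L|) := by
  have hρpos : ∀ t, (0:ℝ) < ‖r t‖ := fun t => norm_pos_iff.mpr (hr0 t)
  have hθ' : ∀ t, HasDerivAt θ (deriv θ t) t := fun t => (hθdiff t).hasDerivAt
  have hρ' : ∀ t, HasDerivAt (fun s => ‖r s‖) (deriv (fun s => ‖r s‖) t) t := fun t =>
    (((hr t).differentiableAt).norm ℝ (hr0 t)).hasDerivAt
  -- components of r
  have hr0c : ∀ t, r t 0 = ‖r t‖ * Real.cos (θ t) := by
    intro t
    have := congrArg (fun v => v 0) (hθ t)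
    simpa [ex, ey, EuclideanSpace.single_apply] using this
  have hr1c : ∀ t, r t 1 = ‖r t‖ * Real.sin (θ t) := by
    intro t
    have := congrArg (fun v => v 1) (hθ t)
    simpa [ex, ey, EuclideanSpace.single_apply] using this
  -- angular momentum component
  have hLc : ∀ t, r t 0 * p t 1 - r t 1 * p t 0 = L := by
    intro t
    have := congrArg (fun v => v 2) (hang t)
    simpa [cross, ez, EuclideanSpace.single_apply] using this
  -- derivatives of components of r
  have hrc : ∀ t (i : Fin 3), HasDerivAt (fun s => r s i) ((1 / m) * p t i) t := by
    intro t i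
    simpa using comp_deriv i (hr t)
  -- derivative of θ
  have hθval : ∀ t, deriv θ t = L / (m * ‖r t‖ ^ 2) := by
    intro t
    have h0 : HasDerivAt (fun s => ‖r s‖ * Real.cos (θ s))
        (deriv (fun s => ‖r s‖) t * Real.cos (θ t) +
          ‖r t‖ * (-Real.sin (θ t) * deriv θ t)) t :=
      (hρ' t).mul ((Real.hasDerivAt_cos (θ t)).comp t (hθ' t))
    have h1 : HasDerivAt (fun s => ‖r s‖ * Real.sin (θ s))
        (deriv (fun s => ‖r s‖) t * Real.sin (θ t) +
          ‖r t‖ * (Real.cos (θ t) * deriv θ t)) t :=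
      (hρ' t).mul ((Real.hasDerivAt_sin (θ t)).comp t (hθ' t))
    have e0 : (1 / m) * p t 0 = deriv (fun s => ‖r s‖) t * Real.cos (θ t) +
        ‖r t‖ * (-Real.sin (θ t) * deriv θ t) := by
      refine HasDerivAt.unique ?_ h0
      have := hrc t 0
      simpa only [funext hr0c] using this
    have e1 : (1 / m) * p t 1 = deriv (fun s => ‖r s‖) t * Real.sin (θ t) +
        ‖r t‖ * (Real.cos (θ t) * deriv θ t) := by
      refine HasDerivAt.unique ?_ h1
      have := hrc t 1
      simpa only [funext hr1c] using this
    have hLt := hLc t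
    rw [hr0c t, hr1c t] at hLt
    have hsc := Real.sin_sq_add_cos_sq (θ t)
    have hm' : m ≠ 0 := hm.ne'
    have hρ : ‖r t‖ ≠ 0 := (hρpos t).ne'
    have hp0 : p t 0 = m * (deriv (fun s => ‖r s‖) t * Real.cos (θ t) +
        ‖r t‖ * (-Real.sin (θ t) * deriv θ t)) := by
      rw [← e0]; field_simp
    have hp1 : p t 1 = m * (deriv (fun s => ‖r s‖) t * Real.sin (θ t) +
        ‖r t‖ * (Real.cos (θ t) * deriv θ t)) := by
      rw [← e1]; field_simp
    rw [eq_div_iff (by positivity)]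
    linear_combination hLt + (‖r t‖ * Real.sin (θ t)) * hp0 -
      (‖r t‖ * Real.cos (θ t)) * hp1 - (m * ‖r t‖ ^ 2 * deriv θ t) * hsc
  -- F is constant
  set F : ℝ → EuclideanSpace ℝ (Fin 3) := fun t =>
    p t - (m ^ 2 * k / L) • (-Real.sin (θ t) • ex + Real.cos (θ t) • ey) with hFdef
  have hF : ∀ t, HasDerivAt F 0 t := by
    intro t
    have hv : HasDerivAt (fun s => -Real.sin (θ s) • ex + Real.cos (θ s) • ey)
        ((-(Real.cos (θ t) * deriv θ t)) • ex + (-Real.sin (θ t) * deriv θ t) • ey) t :=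
      ((((Real.hasDerivAt_sin (θ t)).comp t (hθ' t)).neg).smul_const ex).add
        (((Real.hasDerivAt_cos (θ t)).comp t (hθ' t)).smul_const ey)
    have hD := (hp t).sub (hv.const_smul (m ^ 2 * k / L))
    have hz : (-(k * m / ‖r t‖ ^ 3) • r t -
        (m ^ 2 * k / L) • ((-(Real.cos (θ t) * deriv θ t)) • ex +
          (-Real.sin (θ t) * deriv θ t) • ey) : EuclideanSpace ℝ (Fin 3)) = 0 := by
      rw [hθval t]
      nth_rewrite 2 [hθ t]
      have hρ : ‖r t‖ ≠ 0 := (hρpos t).ne'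
      have hm' : m ≠ 0 := hm.ne'
      match_scalars <;> field_simp <;> ring
    rw [← hz]
    exact hD
  have hfderiv : ∀ s, fderiv ℝ F s = 0 := by
    intro s
    rw [(hF s).hasFDerivAt.fderiv]
    ext x
    simp
  have hconst : ∀ t, F t = F 0 :=
    fun t => is_const_of_fderiv_eq_zero (fun s => (hF s).differentiableAt) hfderiv t 0
  refine ⟨p 0 - (m ^ 2 * k / L) • (-Real.sin (θ 0) • ex + Real.cos (θ 0) • ey), ?_, ?_⟩
  pick_goal 2
  · intro t
    have h := hconst t
    simp only [hFdef] at h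
    have hpt : p t - (p 0 - (m ^ 2 * k / L) • (-Real.sin (θ 0) • ex + Real.cos (θ 0) • ey))
        = (m ^ 2 * k / L) • (-Real.sin (θ t) • ex + Real.cos (θ t) • ey) := by
      rw [← h]; abel
    rw [hpt, norm_smul]
    rw [norm_unit_vec (θ t) _ _ (by nlinarith [Real.sin_sq_add_cos_sq (θ t)])]
    rw [Real.norm_eq_abs, abs_div, mul_one, abs_of_pos (by positivity : (0:ℝ) < m ^ 2 * k)]
  · intro t
    have h := hconst t
    simp only [hFdef] at h
    rw [sub_eq_iff_eq_add] at h
    rw [h, add_comm]
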